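/- Let A and B be d×d Hermitian matrices with eigenvalues η₁(A) ≥ ... ≥ η_d(A) and η₁(B) ≥ ... ≥ η_d(B). Then ∑ᵢ ηᵢ(A)·η_{d-i+1}(B) ≤ Tr(AB) ≤ ∑ᵢ ηᵢ(A)·ηᵢ(B). -/

import Mathlib

open Matrix Finset

lemma ruhe_unitary_sq_doublyStochastic (d : ℕ) (M : Matrix (Fin d) (Fin d) ℂ)
    (hM : M ∈ Matrix.unitaryGroup (Fin d) ℂ) :
    (fun i j => Complex.normSq (M i j)) ∈ doublyStochastic ℝ (Fin d) := by
  apply mem_doublyStochastic_iff_sum.mpr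
  refine ⟨fun i j => Complex.normSq_nonneg _, fun i => ?_, fun j => ?_⟩
  · have h := Matrix.mem_unitaryGroup_iff.mp hM
    have : (M * star M) i i = 1 := by rw [h]; simp
    rw [Matrix.mul_apply] at this
    have h2 : ∀ j, M i j * star M j i = (Complex.normSq (M i j) : ℂ) := by
      intro j
      simp [Matrix.star_apply, Complex.mul_conj]
    rw [Finset.sum_congr rfl (fun j _ => h2 j)] at this
    exact_mod_cast this
  · have h := Matrix.mem_unitaryGroup_iff'.mp hM
    have : (star M * M) j j = 1 := by rw [h]; simp
    rw [Matrix.mul_apply] at this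
    have h2 : ∀ i, star M j i * M i j = (Complex.normSq (M i j) : ℂ) := by
      intro i
      simp [Matrix.star_apply, mul_comm, Complex.mul_conj]
    rw [Finset.sum_congr rfl (fun i _ => h2 i)] at this
    exact_mod_cast this

lemma ruhe_trace_formula (d : ℕ) (A B : Matrix (Fin d) (Fin d) ℂ)
    (hA : A.IsHermitian) (hB : B.IsHermitian) :
    ((A * B).trace).re =
      ∑ i, ∑ j, hA.eigenvalues i * hB.eigenvalues j *
        Complex.normSq ((star (hA.eigenvectorUnitary : Matrix (Fin d) (Fin d) ℂ) *
          (hB.eigenvectorUnitary : Matrix (Fin d) (Fin d) ℂ)) i j) := by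
  set U : Matrix (Fin d) (Fin d) ℂ := (hA.eigenvectorUnitary : Matrix (Fin d) (Fin d) ℂ) with hU
  set V : Matrix (Fin d) (Fin d) ℂ := (hB.eigenvectorUnitary : Matrix (Fin d) (Fin d) ℂ) with hV
  have hcoe : (RCLike.ofReal : ℝ → ℂ) = Complex.ofReal := rfl
  set Da : Matrix (Fin d) (Fin d) ℂ := diagonal (Complex.ofReal ∘ hA.eigenvalues) with hDa
  set Db : Matrix (Fin d) (Fin d) ℂ := diagonal (Complex.ofReal ∘ hB.eigenvalues) with hDb
  set M : Matrix (Fin d) (Fin d) ℂ := star U * V with hM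
  have key : (A * B).trace = (Da * (M * (Db * star M))).trace := by
    conv_lhs => rw [hA.spectral_theorem, hB.spectral_theorem]
    simp only [Unitary.conjStarAlgAut_apply]
    rw [hcoe]
    rw [show (U * Da * star U) * (V * Db * star V)
        = U * (Da * (star U * (V * (Db * star V)))) by simp only [mul_assoc]]
    rw [Matrix.trace_mul_comm]
    congr 1
    simp only [hM, Matrix.star_mul, star_star, mul_assoc]
  rw [key, Matrix.trace]
  have diagval : ∀ i, (Da * (M * (Db * star M))).diag i
      = ((∑ j, hA.eigenvalues i * hB.eigenvalues j * Complex.normSq (M i j) : ℝ) : ℂ) := by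
    intro i
    rw [Matrix.diag_apply, Matrix.mul_apply]
    rw [Finset.sum_eq_single i
      (fun k _ hk => by simp [hDa, Matrix.diagonal_apply_ne _ (Ne.symm hk)]) (by simp)]
    rw [show Da i i = (hA.eigenvalues i : ℂ) by simp [hDa, RCLike.ofReal]]
    rw [Matrix.mul_apply, Finset.mul_sum]
    push_cast
    congr 1
    ext j
    rw [Matrix.mul_apply, Finset.sum_eq_single j
      (fun k _ hk => by simp [hDb, Matrix.diagonal_apply_ne _ (Ne.symm hk)]) (by simp)]
    simp only [hDb, Matrix.diagonal_apply_eq, Function.comp_apply, Matrix.star_apply,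
      Complex.star_def]
    rw [show ((Complex.normSq (M i j) : ℂ)) = M i j * (starRingEnd ℂ) (M i j) from
      (Complex.mul_conj _).symm]
    ring
  rw [Finset.sum_congr rfl (fun i _ => diagval i)]
  push_cast
  simp

lemma ruhe_perm_upper {d : ℕ} {a b : Fin d → ℝ} (ha : Antitone a) (hb : Antitone b)
    (σ : Equiv.Perm (Fin d)) : ∑ i, a i * b (σ i) ≤ ∑ i, a i * b i :=
  (ha.monovary hb).sum_mul_comp_perm_le_sum_mul

lemma ruhe_perm_lower {d : ℕ} {a b : Fin d → ℝ} (ha : Antitone a) (hb : Antitone b)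
    (σ : Equiv.Perm (Fin d)) : ∑ i, a i * b i.rev ≤ ∑ i, a i * b (σ i) := by
  have hmono : Monotone (b ∘ Fin.rev) := fun i j h => hb (Fin.rev_le_rev.mpr h)
  have hav : Antivary a (b ∘ Fin.rev) := ha.antivary hmono
  have := hav.sum_mul_le_sum_mul_comp_perm (σ := σ.trans Fin.revPerm)
  simpa [Fin.rev_rev] using this

lemma ruhe_doublyStochastic_bound (d : ℕ) (a b : Fin d → ℝ) (ha : Antitone a) (hb : Antitone b)
    (S : Matrix (Fin d) (Fin d) ℝ) (hS : S ∈ doublyStochastic ℝ (Fin d)) :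
    (∑ i, a i * b i.rev) ≤ ∑ i, ∑ j, a i * b j * S i j ∧
    ∑ i, ∑ j, a i * b j * S i j ≤ ∑ i, a i * b i := by
  obtain ⟨w, hw0, hw1, hwS⟩ := exists_eq_sum_perm_of_mem_doublyStochastic hS
  have hSij : ∀ i j, S i j = ∑ σ : Equiv.Perm (Fin d), w σ * σ.permMatrix ℝ i j := by
    intro i j
    rw [← hwS]
    simp [Matrix.sum_apply, Matrix.smul_apply, smul_eq_mul]
  have key : ∑ i, ∑ j, a i * b j * S i j
      = ∑ σ : Equiv.Perm (Fin d), w σ * ∑ i, a i * b (σ i) := by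
    simp only [hSij, Finset.mul_sum]
    rw [Finset.sum_congr rfl (fun i _ => Finset.sum_comm), Finset.sum_comm]
    apply Finset.sum_congr rfl
    intro σ _
    apply Finset.sum_congr rfl
    intro i _
    rw [Finset.sum_eq_single (σ i) ?_ (by simp)]
    · simp [Equiv.Perm.permMatrix, PEquiv.toMatrix_apply, Equiv.toPEquiv_apply]
      ring
    · intro j _ hj
      simp [Equiv.Perm.permMatrix, PEquiv.toMatrix_apply, Equiv.toPEquiv_apply, Ne.symm hj]
  constructor
  · rw [key]
    calc ∑ i, a i * b i.rev = ∑ σ : Equiv.Perm (Fin d), w σ * ∑ i, a i * b i.rev := by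
          rw [← Finset.sum_mul, hw1, one_mul]
      _ ≤ _ := Finset.sum_le_sum fun σ _ =>
          mul_le_mul_of_nonneg_left (ruhe_perm_lower ha hb σ) (hw0 σ)
  · rw [key]
    calc ∑ σ : Equiv.Perm (Fin d), w σ * ∑ i, a i * b (σ i)
        ≤ ∑ σ : Equiv.Perm (Fin d), w σ * ∑ i, a i * b i := Finset.sum_le_sum fun σ _ =>
          mul_le_mul_of_nonneg_left (ruhe_perm_upper ha hb σ) (hw0 σ)
      _ = _ := by rw [← Finset.sum_mul, hw1, one_mul]

/-- Ruhe's trace inequality (von Neumann trace inequality for Hermitian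
matrices): if `a` and `b` are the decreasingly ordered eigenvalue sequences
of Hermitian matrices `A` and `B`, then
`∑ aᵢ b_{d-i+1} ≤ Tr(AB) ≤ ∑ aᵢ bᵢ`. -/
theorem ruhe_trace_inequality
    (d : ℕ) (A B : Matrix (Fin d) (Fin d) ℂ)
    (hA : A.IsHermitian) (hB : B.IsHermitian)
    (a b : Fin d → ℝ) (ha : Antitone a) (hb : Antitone b)
    (haeig : ∃ e : Equiv.Perm (Fin d), a = hA.eigenvalues ∘ e)
    (hbeig : ∃ e : Equiv.Perm (Fin d), b = hB.eigenvalues ∘ e) :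
    (∑ i, a i * b i.rev) ≤ ((A * B).trace).re ∧
      ((A * B).trace).re ≤ ∑ i, a i * b i := by
  obtain ⟨e, hae⟩ := haeig
  obtain ⟨f, hbf⟩ := hbeig
  set M : Matrix (Fin d) (Fin d) ℂ :=
    star (hA.eigenvectorUnitary : Matrix (Fin d) (Fin d) ℂ) *
      (hB.eigenvectorUnitary : Matrix (Fin d) (Fin d) ℂ) with hM
  have hMu : M ∈ Matrix.unitaryGroup (Fin d) ℂ :=
    mul_mem (Unitary.star_mem hA.eigenvectorUnitary.2) hB.eigenvectorUnitary.2
  set S0 : Matrix (Fin d) (Fin d) ℝ := fun i j => Complex.normSq (M i j) with hS0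
  have hS0ds : S0 ∈ doublyStochastic ℝ (Fin d) :=
    ruhe_unitary_sq_doublyStochastic d M hMu
  set S : Matrix (Fin d) (Fin d) ℝ := fun i j => S0 (e i) (f j) with hS
  have hSds : S ∈ doublyStochastic ℝ (Fin d) := by
    rw [mem_doublyStochastic_iff_sum]
    refine ⟨fun i j => Complex.normSq_nonneg _, fun i => ?_, fun j => ?_⟩
    · rw [show (∑ j, S i j) = ∑ j, S0 (e i) (f j) from rfl,
        Equiv.sum_comp f (fun j => S0 (e i) j)]
      exact sum_row_of_mem_doublyStochastic hS0ds (e i)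
    · rw [show (∑ i, S i j) = ∑ i, S0 (e i) (f j) from rfl,
        Equiv.sum_comp e (fun i => S0 i (f j))]
      exact sum_col_of_mem_doublyStochastic hS0ds (f j)
  have htr : ((A * B).trace).re = ∑ i, ∑ j, a i * b j * S i j := by
    rw [ruhe_trace_formula d A B hA hB]
    rw [← Equiv.sum_comp e (fun i => ∑ j, hA.eigenvalues i * hB.eigenvalues j * S0 i j)]
    apply Finset.sum_congr rfl
    intro i _
    rw [← Equiv.sum_comp f (fun j => hA.eigenvalues (e i) * hB.eigenvalues j * S0 (e i) j)]
    apply Finset.sum_congr rfl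
    intro j _
    simp [hae, hbf, hS]
  rw [htr]
  exact ruhe_doublyStochastic_bound d a b ha hb S hSds
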